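/- Let 0 < μ_m < ⋯ < μ_1 and 0 < ε < 1 − max_{1 ≤ j < i ≤ m} (μ_i/μ_j). For indices i, j ∈ {1,…,m}, set ε_{ij} = 1 if i > j and ε_{ij} = −1 otherwise. For (x,ξ) in the triangle T, define the characteristic χ_{ij}(ν) = x + ε_{ij} μ_i ν, ζ_{ij}(ν) = ξ + ε_{ij} μ_j ν, terminating on the boundary of T at parameter ν^F. Then −ε_{ij}(μ_i − (1−ε)μ_j) > 0, and for every q ∈ ℕ, ∫_0^{ν^F} (χ_{ij}(ν) − (1−ε)ζ_{ij}(ν))^q dν ≤ (1/(−ε_{ij}(μ_i − (1−ε)μ_j))) · (x − (1−ε)ξ)^{q+1}/(q+1). -/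
import Mathlib


/-- Integral estimate along the characteristics of the L-kernels. With
0 < μ_m < ⋯ < μ_1, ε < 1 - max_{j<i} μ_i/μ_j, and the sign ε_{ij} = 1 for
i > j and -1 otherwise, one has -ε_{ij}(μ_i - (1-ε)μ_j) > 0 and the integral
of (χ - (1-ε)ζ)^q along the characteristic is bounded as stated.
(Indices increase: i < j in `Fin m` means μ j < μ i, i.e. i is the "faster"
index, matching the paper's ordering μ_1 > ⋯ > μ_m.) -/
theorem stmt_6 (m : ℕ) (μ : Fin m → ℝ)
    (hμpos : ∀ i, 0 < μ i)
    (hμdec : ∀ i j : Fin m, i < j → μ j < μ i)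
    (ε : ℝ) (hε0 : 0 < ε)
    (hεmax : ∀ i j : Fin m, j < i → ε < 1 - μ i / μ j)
    (hε1 : ε < 1)
    (i j : Fin m) (x ξ : ℝ)
    (hT : 0 ≤ ξ ∧ ξ ≤ x ∧ x ≤ 1)
    (eij : ℝ) (heij : eij = if j < i then (1:ℝ) else -1)
    (νF : ℝ) (hνF0 : 0 ≤ νF)
    (hInT : ∀ ν ∈ Set.Icc 0 νF,
      0 ≤ ξ + eij * μ j * ν ∧ ξ + eij * μ j * ν ≤ x + eij * μ i * ν ∧
        x + eij * μ i * ν ≤ 1)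
    (hBoundary : ξ + eij * μ j * νF = 0 ∨
      x + eij * μ i * νF = ξ + eij * μ j * νF ∨ x + eij * μ i * νF = 1) :
    0 < -eij * (μ i - (1 - ε) * μ j) ∧
    ∀ q : ℕ,
      ∫ ν in (0:ℝ)..νF, (x + eij * μ i * ν - (1 - ε) * (ξ + eij * μ j * ν)) ^ q ≤
        (1 / (-eij * (μ i - (1 - ε) * μ j))) * (x - (1 - ε) * ξ) ^ (q + 1) / (q + 1) := by

  have hK : 0 < -eij * (μ i - (1 - ε) * μ j) := by
    rcases lt_trichotomy i j with h | h | h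
    · have hji : ¬ j < i := not_lt_of_gt h
      rw [heij]; simp only [hji, if_false]
      have h2 := hμdec i j h
      nlinarith [hμpos i, hμpos j]
    · subst h; rw [heij]; simp only [lt_irrefl, if_false]
      nlinarith [hμpos i]
    · rw [heij]; simp only [h, if_true]
      have h2 := hεmax i j h
      have h3 : μ i / μ j < 1 - ε := by linarith
      have h4 := (div_lt_iff₀ (hμpos j)).mp h3
      nlinarith
  refine ⟨hK, fun q => ?_⟩
  set K := -eij * (μ i - (1 - ε) * μ j) with hKdef
  set A := x - (1 - ε) * ξ with hAdef
  have hKne : K ≠ 0 := ne_of_gt hK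
  have hKne' : -K ≠ 0 := neg_ne_zero.mpr hKne
  have hQ : (0:ℝ) < (q:ℝ) + 1 := by positivity
  have hint : ∀ ν : ℝ, x + eij * μ i * ν - (1 - ε) * (ξ + eij * μ j * ν)
      = -K * ν + A := by
    intro ν; rw [hKdef, hAdef]; ring
  obtain ⟨h1, h2, h3⟩ := hInT νF ⟨hνF0, le_rfl⟩
  have hB : 0 ≤ -K * νF + A := by
    rw [← hint νF]; nlinarith
  have hBq : 0 ≤ (-K * νF + A) ^ (q + 1) := pow_nonneg hB _
  simp only [hint]
  rw [intervalIntegral.integral_comp_mul_add (fun y => y ^ q) hKne' A,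
    integral_pow, smul_eq_mul]
  have hLHS : (-K)⁻¹ * (((-K * νF + A) ^ (q + 1) - (-K * 0 + A) ^ (q + 1)) / ((q:ℝ) + 1))
      = (A ^ (q + 1) - (-K * νF + A) ^ (q + 1)) / (K * ((q:ℝ) + 1)) := by
    field_simp
    ring
  rw [hLHS]
  have hE : (1 / K) * A ^ (q + 1) / ((q:ℝ) + 1) = A ^ (q + 1) / (K * ((q:ℝ) + 1)) := by
    field_simp
  rw [hE]
  gcongr
  linarith
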